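/- Fix k ∈ ℕ. Suppose α, β, φ : [0,∞) → ℝ are functions with α, β convex, nondecreasing, piecewise affine, twice differentiable except at countably many points, and φ of class C² on (0,∞), such that: (a) φ ≤ α and φ ≤ β pointwise on (0,∞); (b) the set {u > 0 : φ(u) = α(u)} is a discrete set {s_n : n ∈ ℤ} contained in the set of non-differentiability (kink) points of α, with α right-differentiable everywhere and φ'(s_n) = α'(s_n+) for all n; and similarly the set {u > 0 : φ(u) = β(u)} = {t_n : n ∈ ℤ} with φ'(t_n) = β'(t_n+), where the two sets {s_n} and {t_n} are disjoint. Define X₁ = α − φ and X₂ = β − φ, with external force F = −φ''. Then X₁ and X₂ are two distinct solutions of the constrained system: Xᵢ ≥ 0 everywhere; Xᵢ(u) = 0 implies the right derivative Ẋᵢ(u+) = 0; and on every open interval where Xᵢ > 0, Xᵢ satisfies Ẍᵢ = F. -/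

import Mathlib

open Set Filter

/-- The structure of the counterexample to uniqueness for the deterministic
completely inelastic bouncing problem: two convex piecewise-affine majorants
`α`, `β` of a `C²` function `φ`, touching it along disjoint sequences of kink
points, give rise to two distinct solutions `X₁ = α - φ`, `X₂ = β - φ` of the
constrained system with external force `F = -φ''`. -/
theorem stmt11 (k : ℕ) (α β φ : ℝ → ℝ) (s t : ℤ → ℝ)
    -- α, β convex nondecreasing
    (hαconv : ConvexOn ℝ (Set.Ici 0) α) (hαmono : MonotoneOn α (Set.Ici 0))
    (hβconv : ConvexOn ℝ (Set.Ici 0) β) (hβmono : MonotoneOn β (Set.Ici 0))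
    -- α, β right-differentiable everywhere on [0,∞)
    (hαrd : ∀ u : ℝ, 0 ≤ u → DifferentiableWithinAt ℝ α (Set.Ici u) u)
    (hβrd : ∀ u : ℝ, 0 ≤ u → DifferentiableWithinAt ℝ β (Set.Ici u) u)
    -- α, β piecewise affine: locally affine away from their kink points s n, t n
    (hαaff : ∀ u : ℝ, 0 < u → u ∉ Set.range s →
      ∃ c d : ℝ, ∀ᶠ v in nhds u, α v = c * v + d)
    (hβaff : ∀ u : ℝ, 0 < u → u ∉ Set.range t →
      ∃ c d : ℝ, ∀ᶠ v in nhds u, β v = c * v + d)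
    -- φ of class C² on (0,∞)
    (hφ : ContDiffOn ℝ 2 φ (Set.Ioi 0))
    -- (a) φ ≤ α and φ ≤ β on (0,∞)
    (hφα : ∀ u : ℝ, 0 < u → φ u ≤ α u)
    (hφβ : ∀ u : ℝ, 0 < u → φ u ≤ β u)
    -- (b) the contact sets are exactly the kink sequences, which are positive,
    -- discrete and disjoint, and the right derivatives match there
    (hspos : ∀ n : ℤ, 0 < s n) (htpos : ∀ n : ℤ, 0 < t n)
    (hsdisc : ∀ n : ℤ, ∃ ε > (0:ℝ), ∀ m : ℤ, m ≠ n → |s m - s n| ≥ ε)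
    (htdisc : ∀ n : ℤ, ∃ ε > (0:ℝ), ∀ m : ℤ, m ≠ n → |t m - t n| ≥ ε)
    (hconα : ∀ u : ℝ, 0 < u → (φ u = α u ↔ u ∈ Set.range s))
    (hconβ : ∀ u : ℝ, 0 < u → (φ u = β u ↔ u ∈ Set.range t))
    (hdisj : Disjoint (Set.range s) (Set.range t))
    (hdα : ∀ n : ℤ, derivWithin φ (Set.Ici (s n)) (s n) = derivWithin α (Set.Ici (s n)) (s n))
    (hdβ : ∀ n : ℤ, derivWithin φ (Set.Ici (t n)) (t n) = derivWithin β (Set.Ici (t n)) (t n))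
    -- the two trajectories and the force
    (X₁ X₂ F : ℝ → ℝ)
    (hX₁ : ∀ u, X₁ u = α u - φ u) (hX₂ : ∀ u, X₂ u = β u - φ u)
    (hF : ∀ u, F u = -(deriv (deriv φ) u)) :
    -- X₁ and X₂ are distinct solutions of the constrained system
    (∀ u : ℝ, 0 < u → 0 ≤ X₁ u ∧ 0 ≤ X₂ u) ∧
    (∀ u : ℝ, 0 < u → X₁ u = 0 → derivWithin X₁ (Set.Ici u) u = 0) ∧
    (∀ u : ℝ, 0 < u → X₂ u = 0 → derivWithin X₂ (Set.Ici u) u = 0) ∧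
    (∀ a b : ℝ, 0 ≤ a → (∀ u ∈ Set.Ioo a b, 0 < X₁ u) →
      ∀ u ∈ Set.Ioo a b, deriv (deriv X₁) u = F u) ∧
    (∀ a b : ℝ, 0 ≤ a → (∀ u ∈ Set.Ioo a b, 0 < X₂ u) →
      ∀ u ∈ Set.Ioo a b, deriv (deriv X₂) u = F u) ∧
    (∃ u : ℝ, 0 < u ∧ X₁ u ≠ X₂ u) := by
  -- helper for the stopping condition (zero right derivative at contact)
  have key2 : ∀ (γ X : ℝ → ℝ) (r : ℤ → ℝ),
      (∀ u : ℝ, 0 ≤ u → DifferentiableWithinAt ℝ γ (Set.Ici u) u) →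
      (∀ u : ℝ, 0 < u → (φ u = γ u ↔ u ∈ Set.range r)) →
      (∀ n : ℤ, derivWithin φ (Set.Ici (r n)) (r n) = derivWithin γ (Set.Ici (r n)) (r n)) →
      (∀ u, X u = γ u - φ u) →
      ∀ u : ℝ, 0 < u → X u = 0 → derivWithin X (Set.Ici u) u = 0 := by
    intro γ X r hrd hcon hd hX u hu hXu
    have hφγ : φ u = γ u := by have := hX u; linarith [hXu, this]
    obtain ⟨n, hn⟩ := (hcon u hu).1 hφγ
    have hφdiff : DifferentiableAt ℝ φ u :=
      (hφ.contDiffAt (Ioi_mem_nhds hu)).differentiableAt (by norm_num)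
    have hud : UniqueDiffWithinAt ℝ (Set.Ici u) u := uniqueDiffOn_Ici u u Set.self_mem_Ici
    have hXeq : X = fun v => γ v - φ v := funext hX
    rw [hXeq, derivWithin_fun_sub (hrd u hu.le) hφdiff.differentiableWithinAt]
    rw [← hn] at *
    rw [← hd n]
    ring
  -- helper for the second-order ODE away from contact
  have key : ∀ (γ X : ℝ → ℝ) (r : ℤ → ℝ),
      (∀ u : ℝ, 0 < u → u ∉ Set.range r → ∃ c d : ℝ, ∀ᶠ v in nhds u, γ v = c * v + d) →
      (∀ u : ℝ, 0 < u → (φ u = γ u ↔ u ∈ Set.range r)) →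
      (∀ u : ℝ, 0 < u → φ u ≤ γ u) →
      (∀ u, X u = γ u - φ u) →
      ∀ a b : ℝ, 0 ≤ a → (∀ u ∈ Set.Ioo a b, 0 < X u) →
      ∀ u ∈ Set.Ioo a b, deriv (deriv X) u = F u := by
    intro γ X r haff hcon _hle hX a b ha hpos u hu
    have hu0 : 0 < u := lt_of_le_of_lt ha hu.1
    have hne : φ u ≠ γ u := by
      intro h
      have := hX u
      have := hpos u hu
      linarith
    have hnr : u ∉ Set.range r := fun h => hne ((hcon u hu0).2 h)
    obtain ⟨c, d, hcd⟩ := haff u hu0 hnr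
    have hXeq : X =ᶠ[nhds u] fun v => c * v + d - φ v := by
      filter_upwards [hcd] with v hv
      rw [hX v, hv]
    have h1 : deriv X =ᶠ[nhds u] deriv (fun v => c * v + d - φ v) := hXeq.deriv
    have h2 : deriv (fun v => c * v + d - φ v) =ᶠ[nhds u] fun v => c - deriv φ v := by
      filter_upwards [Ioi_mem_nhds hu0] with v hv
      have hφv : DifferentiableAt ℝ φ v :=
        (hφ.contDiffAt (Ioi_mem_nhds hv)).differentiableAt (by norm_num)
      have hlin : HasDerivAt (fun w : ℝ => c * w + d) c v := by
        simpa using ((hasDerivAt_id v).const_mul c).add_const d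
      rw [deriv_fun_sub hlin.differentiableAt hφv, hlin.deriv]
    have h3 : deriv X =ᶠ[nhds u] fun v => c - deriv φ v := h1.trans h2
    rw [h3.deriv_eq, hF u]
    rw [deriv_const_sub]
  refine ⟨?_, key2 α X₁ s hαrd hconα hdα hX₁, key2 β X₂ t hβrd hconβ hdβ hX₂,
    key α X₁ s hαaff hconα hφα hX₁, key β X₂ t hβaff hconβ hφβ hX₂, ?_⟩
  · intro u hu
    rw [hX₁ u, hX₂ u]
    constructor <;> linarith [hφα u hu, hφβ u hu]
  · refine ⟨s 0, hspos 0, ?_⟩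
    have h1 : X₁ (s 0) = 0 := by
      rw [hX₁]
      have : φ (s 0) = α (s 0) := (hconα (s 0) (hspos 0)).2 ⟨0, rfl⟩
      linarith
    have h2 : X₂ (s 0) ≠ 0 := by
      rw [hX₂]
      intro h
      have hφβ0 : φ (s 0) = β (s 0) := by linarith
      have : s 0 ∈ Set.range t := (hconβ (s 0) (hspos 0)).1 hφβ0
      exact absurd this (hdisj.ne_of_mem ⟨0, rfl⟩ this (rfl)).elim
    rw [h1]
    exact fun h => h2 h.symm
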